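/- arXiv:1705.06808 — 4 statements merged into one kernel-verified Lean document; each statement's English description precedes it below -/
import Mathlib

section
/- Let m be a positive natural number and let Z be a real random variable whose distribution is the chi-squared distribution with m degrees of freedom (equivalently, the Gamma distribution with shape m/2 and rate 1/2). Then for every δ > 0, P(Z > m + δ) ≤ exp(−(1/2)·(δ + m − √(2δm + m²))). -/
open MeasureTheory ProbabilityTheory Real

/-- Chi-squared tail bound (Lemma 5 of the paper, after Laurent–Massart):
if `Z` is chi-squared with `m` degrees of freedom, i.e. Gamma with shape `m/2` and
rate `1/2`, then `P(Z > m + δ) ≤ exp(−(1/2)(δ + m − √(2δm + m²)))`. -/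
theorem chi_squared_tail_bound
    {Ω : Type*} [MeasureSpace Ω] [IsProbabilityMeasure (ℙ : Measure Ω)]
    (m : ℕ) (hm : 0 < m) (Z : Ω → ℝ)
    (hZ : Measure.map Z ℙ = gammaMeasure ((m : ℝ) / 2) (1 / 2))
    (δ : ℝ) (hδ : 0 < δ) :
    ℙ {ω | (m : ℝ) + δ < Z ω}
      ≤ ENNReal.ofReal
          (Real.exp (-(1 / 2) * (δ + (m : ℝ) - Real.sqrt (2 * δ * (m : ℝ) + (m : ℝ) ^ 2)))) := by
  have hm' : (0:ℝ) < m := by exact_mod_cast hm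
  set a : ℝ := (m : ℝ) / 2 with ha_def
  have ha : 0 < a := by positivity
  set c : ℝ := (m : ℝ) + δ with hc_def
  have hc : 0 < c := by positivity
  set t : ℝ := δ / (2 * c) with ht_def
  set r' : ℝ := (m : ℝ) / (2 * c) with hr'_def
  have hr' : 0 < r' := by positivity
  have ht : 0 < t := by positivity
  have hrt : (1:ℝ)/2 = t + r' := by
    field_simp [ht_def, hr'_def]
    rw [ht_def, hr'_def]; field_simp; ring
  set K : ℝ := Real.exp (-(t * c)) * ((1/2) / r') ^ a with hK_def
  have hK0 : 0 ≤ K := by positivity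
  -- Step 1: rewrite the probability as a gamma measure of Ioi c
  have hZm : AEMeasurable Z ℙ := by
    by_contra h
    have h0 : Measure.map Z ℙ = 0 := Measure.map_of_not_aemeasurable h
    have : IsProbabilityMeasure (gammaMeasure a (1/2)) :=
      isProbabilityMeasure_gammaMeasure ha (by norm_num)
    rw [hZ] at h0
    exact (IsProbabilityMeasure.ne_zero _) h0
  have h1 : ℙ {ω | c < Z ω} = ∫⁻ x in Set.Ioi c, gammaPDF a (1/2) x := by
    have : ℙ {ω | c < Z ω} = Measure.map Z ℙ (Set.Ioi c) := by
      rw [Measure.map_apply_of_aemeasurable hZm measurableSet_Ioi]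
      rfl
    rw [this, hZ, gammaMeasure, withDensity_apply _ measurableSet_Ioi]
  -- Step 2: pointwise Chernoff bound
  have key : ∀ x : ℝ, c ≤ x → gammaPDFReal a (1/2) x ≤ K * gammaPDFReal a r' x := by
    intro x hx
    have hx0 : 0 ≤ x := le_trans hc.le hx
    simp only [gammaPDFReal, if_pos hx0]
    have hpow : ((1:ℝ)/2) ^ a = ((1/2) / r') ^ a * r' ^ a := by
      rw [Real.div_rpow (by norm_num) hr'.le, div_mul_cancel₀]
      exact (Real.rpow_pos_of_pos hr' a).ne'
    have hexp : Real.exp (-(1/2 * x)) ≤ Real.exp (-(t * c)) * Real.exp (-(r' * x)) := by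
      rw [← Real.exp_add, Real.exp_le_exp]
      nlinarith [mul_le_mul_of_nonneg_left hx ht.le]
    calc (1/2) ^ a / Real.Gamma a * x ^ (a - 1) * Real.exp (-(1/2 * x))
        = (((1/2)/r') ^ a * (r' ^ a / Real.Gamma a * x ^ (a-1))) * Real.exp (-(1/2 * x)) := by
          rw [hpow]; ring
      _ ≤ (((1/2)/r') ^ a * (r' ^ a / Real.Gamma a * x ^ (a-1)))
            * (Real.exp (-(t * c)) * Real.exp (-(r' * x))) := by
          apply mul_le_mul_of_nonneg_left hexp
          have := Real.Gamma_pos_of_pos ha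
          positivity
      _ = K * (r' ^ a / Real.Gamma a * x ^ (a-1) * Real.exp (-(r' * x))) := by
          rw [hK_def]; ring
  have key' : ∀ x ∈ Set.Ioi c, gammaPDF a (1/2) x ≤ ENNReal.ofReal K * gammaPDF a r' x := by
    intro x hx
    rw [gammaPDF, gammaPDF, ← ENNReal.ofReal_mul hK0]
    exact ENNReal.ofReal_le_ofReal (key x (le_of_lt hx))
  -- Step 3: integrate
  have h2 : ∫⁻ x in Set.Ioi c, gammaPDF a (1/2) x ≤ ENNReal.ofReal K := by
    calc ∫⁻ x in Set.Ioi c, gammaPDF a (1/2) x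
        ≤ ∫⁻ x in Set.Ioi c, ENNReal.ofReal K * gammaPDF a r' x :=
          setLIntegral_mono (Measurable.const_mul
            ((measurable_gammaPDFReal a r').ennreal_ofReal) _) key'
      _ = ENNReal.ofReal K * ∫⁻ x in Set.Ioi c, gammaPDF a r' x :=
          lintegral_const_mul _ ((measurable_gammaPDFReal a r').ennreal_ofReal)
      _ ≤ ENNReal.ofReal K * ∫⁻ x, gammaPDF a r' x := by
          gcongr
          exact Measure.restrict_le_self
      _ = ENNReal.ofReal K := by
          rw [lintegral_gammaPDF_eq_one ha hr', mul_one]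
  -- Step 4: bound K
  set s : ℝ := Real.sqrt (2 * δ * (m : ℝ) + (m : ℝ) ^ 2) with hs_def
  have hs2 : s ^ 2 = 2 * δ * m + m ^ 2 := Real.sq_sqrt (by positivity)
  have hms : (m : ℝ) ≤ s := by
    rw [hs_def]
    nlinarith [Real.sq_sqrt (show (0:ℝ) ≤ 2 * δ * m + m ^ 2 by positivity),
      Real.sqrt_nonneg (2 * δ * (m:ℝ) + (m:ℝ) ^ 2)]
  set v : ℝ := s / m - 1 with hv_def
  have hv : 0 ≤ v := by
    rw [hv_def, sub_nonneg, le_div_iff₀ hm']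
    linarith
  have hsv : s = m * (v + 1) := by rw [hv_def]; field_simp; ring
  have hδv : δ = m * (v + v ^ 2 / 2) := by
    have h5 : (m:ℝ) * (2 * δ) = (m:ℝ) * ((m:ℝ) * (v ^ 2 + 2 * v)) := by
      linear_combination (s + (m:ℝ) * v + (m:ℝ)) * hsv - hs2
    have h6 := mul_left_cancel₀ hm'.ne' h5
    linear_combination h6 / 2
  have hcm : c / m = 1 + v + v ^ 2 / 2 := by
    rw [hc_def, hδv]; field_simp; ring
  have htc : t * c = δ / 2 := by rw [ht_def]; field_simp
  have hrr : (1/2) / r' = c / m := by rw [hr'_def]; field_simp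
  have h4 : K ≤ Real.exp (-(1 / 2) * (δ + (m : ℝ) - s)) := by
    have hq : c / m ≤ Real.exp v := by
      rw [hcm]
      have := Real.quadratic_le_exp_of_nonneg hv
      linarith
    have hcm0 : 0 ≤ c / m := by positivity
    have hpow : ((1/2) / r') ^ a ≤ Real.exp (v * a) := by
      rw [hrr]
      calc (c / m) ^ a ≤ (Real.exp v) ^ a := Real.rpow_le_rpow hcm0 hq ha.le
        _ = Real.exp (v * a) := by
            rw [← Real.exp_log (Real.rpow_pos_of_pos (Real.exp_pos v) a),
              Real.log_rpow (Real.exp_pos v), Real.log_exp, mul_comm]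
    calc K ≤ Real.exp (-(t * c)) * Real.exp (v * a) := by
          apply mul_le_mul_of_nonneg_left hpow (Real.exp_pos _).le
      _ = Real.exp (-(t*c) + v * a) := (Real.exp_add _ _).symm
      _ = Real.exp (-(1 / 2) * (δ + (m : ℝ) - s)) := by
          congr 1
          rw [htc, ha_def, hsv]
          field_simp
          ring
  calc ℙ {ω | (m:ℝ) + δ < Z ω} = ∫⁻ x in Set.Ioi c, gammaPDF a (1/2) x := h1
    _ ≤ ENNReal.ofReal K := h2
    _ ≤ _ := ENNReal.ofReal_le_ofReal h4
end

section
/- Let m be a positive natural number and let θ = (θ₁,…,θ_m) be a random vector whose coordinates are independent standard Gaussian random variables (mean 0, variance 1). Then for every δ > 0, P(θ₁² + ⋯ + θ_m² ≥ m + 2√(mδ) + 2δ) ≤ exp(−δ). -/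
open MeasureTheory ProbabilityTheory Real
open scoped ENNReal NNReal

lemma gauss_pdf_mul_exp (t x : ℝ) :
    gaussianPDFReal 0 1 x * Real.exp (t * x ^ 2)
      = (Real.sqrt (2 * π))⁻¹ * Real.exp (-(1/2 - t) * x ^ 2) := by
  simp only [gaussianPDFReal, NNReal.coe_one, mul_one, sub_zero]
  rw [mul_assoc, ← Real.exp_add]
  ring_nf

lemma gauss_smul_eq (t : ℝ) :
    (fun x => (gaussianPDFReal 0 1 x).toNNReal • Real.exp (t * x ^ 2))
      = fun x => (Real.sqrt (2 * π))⁻¹ * Real.exp (-(1/2 - t) * x ^ 2) := by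
  funext x
  rw [NNReal.smul_def, Real.coe_toNNReal _ (gaussianPDFReal_nonneg 0 1 x), smul_eq_mul,
    gauss_pdf_mul_exp]

lemma gauss_exp_sq_integrable {t : ℝ} (ht : t < 1/2) :
    Integrable (fun x => Real.exp (t * x ^ 2)) (gaussianReal 0 1) := by
  rw [gaussianReal_of_var_ne_zero 0 one_ne_zero]
  have hmeas : Measurable fun x => (gaussianPDFReal 0 1 x).toNNReal :=
    (measurable_gaussianPDFReal 0 1).real_toNNReal
  have hpdf : gaussianPDF 0 1 = fun x => ((gaussianPDFReal 0 1 x).toNNReal : ℝ≥0∞) := rfl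
  rw [hpdf, integrable_withDensity_iff_integrable_coe_smul hmeas]
  simp_rw [← NNReal.smul_def]
  rw [gauss_smul_eq t]
  exact (integrable_exp_neg_mul_sq (by linarith)).const_mul _

lemma gauss_exp_sq_integral {t : ℝ} (ht : t < 1/2) :
    ∫ x, Real.exp (t * x ^ 2) ∂(gaussianReal 0 1) = 1 / Real.sqrt (1 - 2 * t) := by
  rw [gaussianReal_of_var_ne_zero 0 one_ne_zero]
  have hmeas : Measurable fun x => (gaussianPDFReal 0 1 x).toNNReal :=
    (measurable_gaussianPDFReal 0 1).real_toNNReal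
  have hpdf : gaussianPDF 0 1 = fun x => ((gaussianPDFReal 0 1 x).toNNReal : ℝ≥0∞) := rfl
  rw [hpdf, integral_withDensity_eq_integral_smul hmeas]
  rw [show (fun x => (gaussianPDFReal 0 1 x).toNNReal • Real.exp (t * x ^ 2))
      = fun x => (Real.sqrt (2 * π))⁻¹ * Real.exp (-(1/2 - t) * x ^ 2) from gauss_smul_eq t]
  rw [integral_const_mul, integral_gaussian]
  have hb : (0:ℝ) < 1/2 - t := by linarith
  have hpi : (0:ℝ) < π := Real.pi_pos
  have h1 : Real.sqrt (π / (1/2 - t)) = Real.sqrt π / Real.sqrt (1/2 - t) :=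
    Real.sqrt_div hpi.le _
  have h2 : Real.sqrt (2 * π) = Real.sqrt 2 * Real.sqrt π :=
    Real.sqrt_mul (by norm_num) _
  have h3 : Real.sqrt (1 - 2 * t) = Real.sqrt 2 * Real.sqrt (1/2 - t) := by
    rw [← Real.sqrt_mul (by norm_num : (0:ℝ) ≤ 2)]
    congr 1
    ring
  rw [h1, h2, h3]
  have e1 : Real.sqrt π ≠ 0 := by positivity
  have e2 : Real.sqrt 2 ≠ 0 := by positivity
  have e3 : Real.sqrt (1/2 - t) ≠ 0 := by positivity
  have e4 : Real.sqrt (1 - 2 * t) ≠ 0 := by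
    have : (0:ℝ) < 1 - 2 * t := by linarith
    positivity
  field_simp

/-- Laurent–Massart concentration for the squared norm of a standard Gaussian vector:
if `θ₁, …, θ_m` are independent standard Gaussians, then for every `δ > 0`,
`P(∑ θᵢ² ≥ m + 2√(mδ) + 2δ) ≤ exp(−δ)`. -/
theorem gaussian_squared_norm_upper_tail
    {Ω : Type*} [MeasureSpace Ω] [IsProbabilityMeasure (ℙ : Measure Ω)]
    (m : ℕ) (hm : 0 < m) (θ : Fin m → Ω → ℝ)
    (hmeas : ∀ i, Measurable (θ i))
    (hindep : iIndepFun θ ℙ)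
    (hgauss : ∀ i, Measure.map (θ i) ℙ = gaussianReal 0 1)
    (δ : ℝ) (hδ : 0 < δ) :
    ℙ {ω | (m : ℝ) + 2 * Real.sqrt ((m : ℝ) * δ) + 2 * δ ≤ ∑ i, (θ i ω) ^ 2}
      ≤ ENNReal.ofReal (Real.exp (-δ)) := by
  set s : ℝ := Real.sqrt ((m : ℝ) * δ) with hs_def
  have hs0 : 0 ≤ s := Real.sqrt_nonneg _
  have hssq : s ^ 2 = (m : ℝ) * δ := Real.sq_sqrt (by positivity)
  have hm0 : (0:ℝ) < m := by exact_mod_cast hm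
  set a : ℝ := (m : ℝ) + 2 * s + 2 * δ with ha_def
  have hma : (m : ℝ) < a := by simp only [ha_def]; nlinarith
  have ha0 : (0:ℝ) < a := lt_trans hm0 hma
  set t : ℝ := (1 - (m : ℝ) / a) / 2 with ht_def
  have hma1 : (m : ℝ) / a < 1 := (div_lt_one ha0).mpr hma
  have hma0 : 0 < (m : ℝ) / a := div_pos hm0 ha0
  have ht0 : 0 ≤ t := by simp only [ht_def]; linarith
  have ht2 : 1 - 2 * t = (m : ℝ) / a := by simp only [ht_def]; ring
  have ht : t < 1/2 := by simp only [ht_def]; linarith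
  -- the squared variables
  set X : Fin m → Ω → ℝ := fun i ω => θ i ω ^ 2 with hX_def
  have hXmeas : ∀ i, Measurable (X i) := fun i => (hmeas i).pow_const 2
  have hXindep : iIndepFun X ℙ :=
    hindep.comp (fun _ x => x ^ 2) (fun _ => measurable_id.pow_const 2)
  have hf : AEStronglyMeasurable (fun x => Real.exp (t * x ^ 2)) (gaussianReal 0 1) :=
    Measurable.aestronglyMeasurable (by measurability)
  have hf' : ∀ i, AEStronglyMeasurable (fun x => Real.exp (t * x ^ 2))
      (Measure.map (θ i) ℙ) := fun i => by rw [hgauss i]; exact hf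
  have hint : ∀ i, Integrable (fun ω => Real.exp (t * X i ω)) ℙ := by
    intro i
    have h2 : Integrable ((fun x => Real.exp (t * x ^ 2)) ∘ θ i) ℙ :=
      (integrable_map_measure (hf' i) (hmeas i).aemeasurable).mp
        (by rw [hgauss i]; exact gauss_exp_sq_integrable ht)
    exact h2
  have hmgf : ∀ i, mgf (X i) ℙ t = 1 / Real.sqrt (1 - 2 * t) := by
    intro i
    calc mgf (X i) ℙ t
        = ∫ x, Real.exp (t * x ^ 2) ∂(Measure.map (θ i) ℙ) :=
          (integral_map (hmeas i).aemeasurable (hf' i)).symm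
      _ = 1 / Real.sqrt (1 - 2 * t) := by rw [hgauss i]; exact gauss_exp_sq_integral ht
  have hintS : Integrable (fun ω => Real.exp (t * (∑ i, X i) ω)) ℙ :=
    hXindep.integrable_exp_mul_sum hXmeas (fun i _ => hint i)
  have hch := measure_ge_le_exp_mul_mgf (X := ∑ i, X i) (μ := ℙ) a ht0 hintS
  have hmgfS : mgf (∑ i, X i) ℙ t = (1 / Real.sqrt (1 - 2 * t)) ^ m := by
    rw [hXindep.mgf_sum hXmeas]
    simp [hmgf]
  -- numeric bound
  have hsq : (0:ℝ) < Real.sqrt ((m:ℝ)/a) := Real.sqrt_pos.mpr hma0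
  have hnum : Real.exp (-t * a) * (1 / Real.sqrt (1 - 2 * t)) ^ m ≤ Real.exp (-δ) := by
    have h1 : (1 / Real.sqrt (1 - 2 * t)) = Real.sqrt (a / m) := by
      rw [ht2, one_div, ← Real.sqrt_inv]
      congr 1
      rw [inv_div]
    have hlog : Real.log (a / m) ≤ 2 * s / m := by
      rw [Real.log_le_iff_le_exp (by positivity)]
      have hq := Real.quadratic_le_exp_of_nonneg (x := 2 * s / m) (by positivity)
      have : a / m = 1 + 2 * s / m + (2 * s / m) ^ 2 / 2 := by
        rw [ha_def]
        field_simp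
        nlinarith [hssq]
      linarith [this ▸ hq]
    have hpow : (Real.sqrt (a / m)) ^ m = Real.exp ((m : ℝ) * (Real.log (a / m) / 2)) := by
      rw [← Real.exp_log (x := (Real.sqrt (a / m)) ^ m) (by positivity), Real.log_pow,
        Real.log_sqrt (by positivity)]
    rw [h1, hpow, ← Real.exp_add, Real.exp_le_exp]
    have hta : t * a = (a - m) / 2 := by
      rw [ht_def]
      field_simp
    have ham : a - m = 2 * s + 2 * δ := by simp only [ha_def]; ring
    have : (m : ℝ) * (Real.log (a / m) / 2) ≤ s := by
      calc (m : ℝ) * (Real.log (a / m) / 2) ≤ (m : ℝ) * ((2 * s / m) / 2) := by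
            apply mul_le_mul_of_nonneg_left _ (le_of_lt hm0)
            linarith
        _ = s := by field_simp
    have hta' : -t * a = -((a - m) / 2) := by rw [neg_mul, hta]
    rw [hta', ham]
    linarith
  -- put it together
  have hset : {ω | (m : ℝ) + 2 * Real.sqrt ((m : ℝ) * δ) + 2 * δ ≤ ∑ i, (θ i ω) ^ 2}
      = {ω | a ≤ (∑ i, X i) ω} := by
    ext ω
    simp only [Set.mem_setOf_eq, hX_def, Finset.sum_apply]
    rw [ha_def, hs_def]
  rw [hset]
  have hne : ℙ {ω | a ≤ (∑ i, X i) ω} ≠ ⊤ := measure_ne_top _ _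
  rw [← ENNReal.ofReal_toReal hne]
  apply ENNReal.ofReal_le_ofReal
  calc (ℙ {ω | a ≤ (∑ i, X i) ω}).toReal
      ≤ Real.exp (-t * a) * mgf (∑ i, X i) ℙ t := hch
    _ = Real.exp (-t * a) * (1 / Real.sqrt (1 - 2 * t)) ^ m := by rw [hmgfS]
    _ ≤ Real.exp (-δ) := hnum
end

section
/- Let Φ be a real t×m matrix (t, m ≥ 1) and σ > 0, and set A = ΦᵀΦ + σ²·I_m, which is symmetric positive definite. Then for every u ∈ ℝ^m, every f ∈ ℝ^t, and every θ* ∈ ℝ^m, uᵀA⁻¹Φᵀf ≥ uᵀθ* − ‖u‖·(‖A⁻¹ΦᵀΦ − I_m‖·‖θ*‖ + ‖A⁻¹Φᵀ‖·‖f − Φθ*‖), where ‖·‖ denotes the Euclidean norm on vectors and the spectral (operator) norm on matrices. -/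
open Matrix

/-- The Euclidean norm of a vector in `ℝ^m`. -/
noncomputable def euclNorm {m : ℕ} (v : Fin m → ℝ) : ℝ :=
  Real.sqrt (∑ i, v i ^ 2)

/-- The spectral (operator) norm of a real matrix: the supremum over unit vectors `v`
of `‖Mv‖`. -/
noncomputable def matSpectralNorm {p q : ℕ} (M : Matrix (Fin p) (Fin q) ℝ) : ℝ :=
  sSup {r | ∃ v : Fin q → ℝ, euclNorm v = 1 ∧ r = euclNorm (M *ᵥ v)}

lemma euclNorm_eq {m : ℕ} (v : Fin m → ℝ) :
    euclNorm v = ‖(WithLp.equiv 2 (Fin m → ℝ)).symm v‖ := by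
  rw [euclNorm, EuclideanSpace.norm_eq]
  simp [sq_abs]

lemma euclNorm_nonneg {m : ℕ} (v : Fin m → ℝ) : 0 ≤ euclNorm v :=
  Real.sqrt_nonneg _

lemma euclNorm_smul {m : ℕ} (c : ℝ) (v : Fin m → ℝ) :
    euclNorm (c • v) = |c| * euclNorm v := by
  rw [euclNorm_eq, euclNorm_eq]
  have : (WithLp.equiv 2 (Fin m → ℝ)).symm (c • v)
      = c • (WithLp.equiv 2 (Fin m → ℝ)).symm v := rfl
  rw [this, norm_smul, Real.norm_eq_abs]

lemma euclNorm_eq_zero_iff {m : ℕ} (v : Fin m → ℝ) : euclNorm v = 0 ↔ v = 0 := by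
  rw [euclNorm_eq, norm_eq_zero]
  constructor
  · intro h
    have := congrArg (WithLp.equiv 2 (Fin m → ℝ)) h
    simpa using this
  · rintro rfl; rfl

lemma dotProduct_le {m : ℕ} (u v : Fin m → ℝ) :
    |u ⬝ᵥ v| ≤ euclNorm u * euclNorm v := by
  rw [euclNorm_eq, euclNorm_eq]
  have h : u ⬝ᵥ v = (inner ℝ ((WithLp.equiv 2 (Fin m → ℝ)).symm u)
      ((WithLp.equiv 2 (Fin m → ℝ)).symm v) : ℝ) := by
    simp [PiLp.inner_apply, dotProduct, mul_comm]
  rw [h]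
  exact abs_real_inner_le_norm _ _

lemma matSpectralNorm_mulVec_le {p q : ℕ} (M : Matrix (Fin p) (Fin q) ℝ)
    (v : Fin q → ℝ) : euclNorm (M *ᵥ v) ≤ matSpectralNorm M * euclNorm v := by
  set L := LinearMap.toContinuousLinearMap (Matrix.toEuclideanLin M) with hL
  have key : ∀ w : Fin q → ℝ, euclNorm (M *ᵥ w) ≤ ‖L‖ * euclNorm w := by
    intro w
    have := L.le_opNorm ((WithLp.equiv 2 (Fin q → ℝ)).symm w)
    simpa [euclNorm_eq, hL, Matrix.toEuclideanLin_apply] using this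
  have hbdd : BddAbove {r | ∃ w : Fin q → ℝ, euclNorm w = 1 ∧ r = euclNorm (M *ᵥ w)} := by
    refine ⟨‖L‖, ?_⟩
    rintro r ⟨w, hw, rfl⟩
    have := key w
    rwa [hw, mul_one] at this
  rcases eq_or_ne v 0 with rfl | hv
  · have h0 : euclNorm ((0 : Fin p → ℝ)) = 0 := by simp [euclNorm]
    have h0q : euclNorm ((0 : Fin q → ℝ)) = 0 := by simp [euclNorm]
    simp only [Matrix.mulVec_zero, h0, h0q, mul_zero, le_refl]
  · have hnv : euclNorm v ≠ 0 := fun h => hv ((euclNorm_eq_zero_iff v).mp h)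
    have hpos : 0 < euclNorm v := lt_of_le_of_ne (euclNorm_nonneg v) (Ne.symm hnv)
    set w := (euclNorm v)⁻¹ • v with hwdef
    have hw1 : euclNorm w = 1 := by
      rw [hwdef, euclNorm_smul, abs_of_pos (inv_pos.mpr hpos), inv_mul_cancel₀ hnv]
    have hmem : euclNorm (M *ᵥ w) ∈
        {r | ∃ w : Fin q → ℝ, euclNorm w = 1 ∧ r = euclNorm (M *ᵥ w)} := ⟨w, hw1, rfl⟩
    have hle : euclNorm (M *ᵥ w) ≤ matSpectralNorm M := le_csSup hbdd hmem
    have hMw : M *ᵥ w = (euclNorm v)⁻¹ • (M *ᵥ v) := by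
      rw [hwdef, Matrix.mulVec_smul]
    have : euclNorm (M *ᵥ w) = (euclNorm v)⁻¹ * euclNorm (M *ᵥ v) := by
      rw [hMw, euclNorm_smul, abs_of_pos (inv_pos.mpr hpos)]
    rw [this] at hle
    calc euclNorm (M *ᵥ v) = euclNorm v * ((euclNorm v)⁻¹ * euclNorm (M *ᵥ v)) := by
          field_simp
      _ ≤ euclNorm v * matSpectralNorm M := by
          exact mul_le_mul_of_nonneg_left hle (le_of_lt hpos)
      _ = matSpectralNorm M * euclNorm v := mul_comm _ _

/-- Deterministic core of the paper's Lemma 4: for `A = ΦᵀΦ + σ²I` with `σ > 0`,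
every `u, θ* ∈ ℝ^m` and `f ∈ ℝ^t`,
`uᵀA⁻¹Φᵀf ≥ uᵀθ* − ‖u‖·(‖A⁻¹ΦᵀΦ − I‖·‖θ*‖ + ‖A⁻¹Φᵀ‖·‖f − Φθ*‖)`. -/
theorem lemma4_deterministic_core
    (t m : ℕ) (ht : 0 < t) (hm : 0 < m)
    (Φ : Matrix (Fin t) (Fin m) ℝ) (σ : ℝ) (hσ : 0 < σ)
    (A : Matrix (Fin m) (Fin m) ℝ) (hA : A = Φᵀ * Φ + σ ^ 2 • 1) :
    A.PosDef ∧
    ∀ (u θs : Fin m → ℝ) (f : Fin t → ℝ),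
      u ⬝ᵥ θs
        - euclNorm u * (matSpectralNorm (A⁻¹ * (Φᵀ * Φ) - 1) * euclNorm θs
            + matSpectralNorm (A⁻¹ * Φᵀ) * euclNorm (f - Φ *ᵥ θs))
        ≤ u ⬝ᵥ ((A⁻¹ * Φᵀ) *ᵥ f) := by
  constructor
  · rw [hA]
    have h1 : (Φᵀ * Φ).PosSemidef := by
      have := Matrix.posSemidef_conjTranspose_mul_self Φ
      simpa using this
    have h2 : (σ ^ 2 • (1 : Matrix (Fin m) (Fin m) ℝ)).PosDef := by
      have : σ ^ 2 • (1 : Matrix (Fin m) (Fin m) ℝ)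
          = Matrix.diagonal (fun _ => σ ^ 2) := by
        rw [smul_eq_diagonal_mul, mul_one]
      rw [this]
      exact Matrix.posDef_diagonal_iff.mpr (fun _ => by positivity)
    exact Matrix.PosDef.posSemidef_add h1 h2
  · intro u θs f
    have hdecomp : (A⁻¹ * Φᵀ) *ᵥ f
        = θs + ((A⁻¹ * (Φᵀ * Φ) - 1) *ᵥ θs) + ((A⁻¹ * Φᵀ) *ᵥ (f - Φ *ᵥ θs)) := by
      simp only [Matrix.sub_mulVec, Matrix.mulVec_sub, Matrix.one_mulVec,
        ← Matrix.mulVec_mulVec, Matrix.mul_assoc]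
      abel
    rw [hdecomp, dotProduct_add, dotProduct_add]
    have h1 : -(euclNorm u * (matSpectralNorm (A⁻¹ * (Φᵀ * Φ) - 1) * euclNorm θs))
        ≤ u ⬝ᵥ ((A⁻¹ * (Φᵀ * Φ) - 1) *ᵥ θs) := by
      have hcs := dotProduct_le u ((A⁻¹ * (Φᵀ * Φ) - 1) *ᵥ θs)
      have hsp := matSpectralNorm_mulVec_le (A⁻¹ * (Φᵀ * Φ) - 1) θs
      have := neg_abs_le (u ⬝ᵥ ((A⁻¹ * (Φᵀ * Φ) - 1) *ᵥ θs))
      nlinarith [euclNorm_nonneg u, euclNorm_nonneg ((A⁻¹ * (Φᵀ * Φ) - 1) *ᵥ θs)]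
    have h2 : -(euclNorm u * (matSpectralNorm (A⁻¹ * Φᵀ) * euclNorm (f - Φ *ᵥ θs)))
        ≤ u ⬝ᵥ ((A⁻¹ * Φᵀ) *ᵥ (f - Φ *ᵥ θs)) := by
      have hcs := dotProduct_le u ((A⁻¹ * Φᵀ) *ᵥ (f - Φ *ᵥ θs))
      have hsp := matSpectralNorm_mulVec_le (A⁻¹ * Φᵀ) (f - Φ *ᵥ θs)
      have := neg_abs_le (u ⬝ᵥ ((A⁻¹ * Φᵀ) *ᵥ (f - Φ *ᵥ θs)))
      nlinarith [euclNorm_nonneg u, euclNorm_nonneg ((A⁻¹ * Φᵀ) *ᵥ (f - Φ *ᵥ θs))]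
    nlinarith [h1, h2]
end

section
/- Let Φ be a real t×m matrix (t, m ≥ 1) and σ > 0, and set A = ΦᵀΦ + σ²·I_m, which is symmetric positive definite with smallest eigenvalue λmin(A) > 0. Then for every vector v ∈ ℝ^m, vᵀ(A⁻¹ΦᵀΦA⁻¹)v ≥ (1 − σ²/λmin(A))·vᵀA⁻¹v. -/
open Matrix

lemma rayleigh_min_aux {m : ℕ} (A : Matrix (Fin m) (Fin m) ℝ) (hA : A.IsHermitian)
    (c : ℝ) (hc : ∀ i, c ≤ hA.eigenvalues i) (x : Fin m → ℝ) :
    c * (x ⬝ᵥ x) ≤ x ⬝ᵥ (A *ᵥ x) := by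
  set U : Matrix (Fin m) (Fin m) ℝ := (hA.eigenvectorUnitary : Matrix (Fin m) (Fin m) ℝ) with hUdef
  have hB : (A - c • 1).PosSemidef := by
    have hdiag : (diagonal (fun i => hA.eigenvalues i - c)).PosSemidef :=
      posSemidef_diagonal_iff.mpr fun i => sub_nonneg.mpr (hc i)
    have h1 : A - c • 1 = U * diagonal (fun i => hA.eigenvalues i - c) * Uᴴ := by
      have hspec := hA.spectral_theorem
      simp only [Unitary.conjStarAlgAut_apply, Unitary.coe_star] at hspec
      rw [Matrix.star_eq_conjTranspose, ← hUdef] at hspec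
      have hU : U * Uᴴ = 1 := Matrix.mem_unitaryGroup_iff.mp hA.eigenvectorUnitary.2
      have hd : (diagonal (fun i => hA.eigenvalues i - c))
          = diagonal (RCLike.ofReal ∘ hA.eigenvalues) - c • (1 : Matrix (Fin m) (Fin m) ℝ) := by
        rw [Matrix.smul_one_eq_diagonal, diagonal_sub]
        rfl
      rw [hd, Matrix.mul_sub, Matrix.sub_mul, ← hspec]
      congr 1
      rw [Matrix.mul_smul, Matrix.smul_mul, Matrix.mul_one, hU]
    rw [h1]
    exact hdiag.mul_mul_conjTranspose_same U
  have h2 := hB.dotProduct_mulVec_nonneg x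
  simp only [sub_mulVec, smul_mulVec, one_mulVec, dotProduct_sub, dotProduct_smul,
    smul_eq_mul, star_trivial, sub_nonneg] at h2
  exact h2

/-- Lower bound on the conditional variance ratio from the proof of the paper's
Lemma 6: for `A = ΦᵀΦ + σ²I` with `σ > 0` and every `v`,
`vᵀA⁻¹ΦᵀΦA⁻¹v ≥ (1 − σ²/λmin(A))·vᵀA⁻¹v`. -/
theorem inv_gram_inv_rayleigh_lower_bound
    (t m : ℕ) (ht : 0 < t) (hm : 0 < m)
    (Φ : Matrix (Fin t) (Fin m) ℝ) (σ : ℝ) (hσ : 0 < σ)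
    (A : Matrix (Fin m) (Fin m) ℝ) (hA : A = Φᵀ * Φ + σ ^ 2 • 1)
    (hHerm : A.IsHermitian) :
    A.PosDef ∧ 0 < (⨅ i, hHerm.eigenvalues i) ∧
    ∀ v : Fin m → ℝ,
      (1 - σ ^ 2 / (⨅ i, hHerm.eigenvalues i)) * (v ⬝ᵥ (A⁻¹ *ᵥ v))
        ≤ v ⬝ᵥ ((A⁻¹ * (Φᵀ * Φ) * A⁻¹) *ᵥ v) := by
  haveI : Nonempty (Fin m) := ⟨⟨0, hm⟩⟩
  have hPhi : (Φᵀ * Φ).PosSemidef := by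
    have := Matrix.posSemidef_conjTranspose_mul_self Φ
    simpa using this
  have hsmul : ((σ ^ 2) • (1 : Matrix (Fin m) (Fin m) ℝ)).PosDef := by
    rw [Matrix.smul_one_eq_diagonal]
    exact posDef_diagonal_iff.mpr fun i => pow_pos hσ 2
  have hApd : A.PosDef := by
    rw [hA]; exact Matrix.PosDef.posSemidef_add hPhi hsmul
  set lam := ⨅ i, hHerm.eigenvalues i with hlam
  have heig : ∀ i, 0 < hHerm.eigenvalues i := hApd.eigenvalues_pos
  have hlam_le : ∀ i, lam ≤ hHerm.eigenvalues i := fun i =>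
    ciInf_le (Finite.bddBelow_range _) i
  have hlampos : 0 < lam := by
    obtain ⟨j, hj⟩ := Finite.exists_min hHerm.eigenvalues
    exact lt_of_lt_of_le (heig j) (le_ciInf hj)
  refine ⟨hApd, hlampos, fun v => ?_⟩
  have hdet : IsUnit A.det := isUnit_iff_ne_zero.2 hApd.det_pos.ne'
  have hinvA : A⁻¹ * A = 1 := Matrix.nonsing_inv_mul A hdet
  have hAinv : A * A⁻¹ = 1 := Matrix.mul_nonsing_inv A hdet
  have hkey : A⁻¹ * (Φᵀ * Φ) * A⁻¹ = A⁻¹ - σ ^ 2 • (A⁻¹ * A⁻¹) := by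
    have hPhiEq : Φᵀ * Φ = A - σ ^ 2 • 1 := by rw [hA]; ring_nf; abel
    rw [hPhiEq, Matrix.mul_sub, Matrix.sub_mul, Matrix.mul_assoc, hAinv, Matrix.mul_one,
      Matrix.mul_smul, Matrix.mul_one, Matrix.smul_mul]
  set w := A⁻¹ *ᵥ v with hw
  have hinvHerm : (A⁻¹).IsHermitian := hApd.isHermitian.inv
  have hsymm : (A⁻¹)ᵀ = A⁻¹ := by
    have := hinvHerm.eq
    rwa [conjTranspose_eq_transpose_of_trivial] at this
  have hvw : ∀ y, v ⬝ᵥ (A⁻¹ *ᵥ y) = w ⬝ᵥ y := fun y => by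
    rw [dotProduct_mulVec, ← mulVec_transpose, hsymm]
  have hvEq : A *ᵥ w = v := by rw [hw, mulVec_mulVec, hAinv, one_mulVec]
  have hray : lam * (w ⬝ᵥ w) ≤ v ⬝ᵥ w := by
    have := rayleigh_min_aux A hHerm lam hlam_le w
    rwa [hvEq, dotProduct_comm w v] at this
  have hexp : v ⬝ᵥ ((A⁻¹ * (Φᵀ * Φ) * A⁻¹) *ᵥ v)
      = v ⬝ᵥ w - σ ^ 2 * (w ⬝ᵥ w) := by
    rw [hkey, sub_mulVec, smul_mulVec, dotProduct_sub, dotProduct_smul, smul_eq_mul,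
      ← mulVec_mulVec, hvw, hvw, ← hw, dotProduct_comm w v]
  rw [hexp]
  have h1 : σ ^ 2 * (w ⬝ᵥ w) ≤ σ ^ 2 / lam * (v ⬝ᵥ w) := by
    have h2 := mul_le_mul_of_nonneg_left hray (div_nonneg (sq_nonneg σ) hlampos.le)
    calc σ ^ 2 * (w ⬝ᵥ w) = σ ^ 2 / lam * (lam * (w ⬝ᵥ w)) := by
          field_simp
      _ ≤ _ := h2
  have : v ⬝ᵥ (A⁻¹ *ᵥ v) = v ⬝ᵥ w := rfl
  rw [this]
  nlinarith [h1]
end
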